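/- For natural numbers a ≥ 0 and positive integers j, c, Σ_{i=0}^{a-1} (i+j+c)!/(i!·j!·c!) = a·(a+j+c)! / ((j+c+1)·a!·j!·c!). -/

import Mathlib

open Finset

theorem stmt18 (a j c : ℕ) (hj : 1 ≤ j) (hc : 1 ≤ c) :
    ∑ i ∈ Finset.range a,
        ((i + j + c).factorial : ℚ) / (i.factorial * j.factorial * c.factorial) =
      (a : ℚ) * ((a + j + c).factorial : ℚ) /
        (((j : ℚ) + c + 1) * a.factorial * j.factorial * c.factorial) := by
  induction a with
  | zero => simp
  | succ n ih =>
    rw [Finset.sum_range_succ, ih]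
    have h1 : ((n.factorial : ℚ)) ≠ 0 := Nat.cast_ne_zero.mpr n.factorial_ne_zero
    have h2 : ((j.factorial : ℚ)) ≠ 0 := Nat.cast_ne_zero.mpr j.factorial_ne_zero
    have h3 : ((c.factorial : ℚ)) ≠ 0 := Nat.cast_ne_zero.mpr c.factorial_ne_zero
    have h4 : ((j : ℚ) + c + 1) ≠ 0 := by positivity
    have e1 : (n + 1 + j + c) = (n + j + c) + 1 := by ring
    rw [e1, Nat.factorial_succ, Nat.factorial_succ]
    push_cast
    field_simp
    ring
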